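/- Gentle measurement lemma (purified-distance form): if Π is an orthogonal projection and ρ is a density operator with Tr[Πρ] ≥ 1 − ε for some ε ∈ [0,1], then the purified distance between ρ and the post-measurement state ρ' := ΠρΠ / Tr[ΠρΠ] satisfies D_p(ρ, ρ') ≤ √ε. -/

import Mathlib

open Matrix
open scoped ComplexOrder

noncomputable def traceNorm {n : Type*} [Fintype n] [DecidableEq n] (A : Matrix n n ℂ) : ℝ :=
  (((Matrix.posSemidef_conjTranspose_mul_self A).1.eigenvectorUnitary.1 *
    diagonal (((↑) : ℝ → ℂ) ∘ (√·) ∘ (Matrix.posSemidef_conjTranspose_mul_self A).1.eigenvalues) *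
    (star (Matrix.posSemidef_conjTranspose_mul_self A).1.eigenvectorUnitary : Matrix n n ℂ)).trace).re

open Classical in
noncomputable def msqrt {n : Type*} [Fintype n] [DecidableEq n] (A : Matrix n n ℂ) : Matrix n n ℂ :=
  if h : A.PosSemidef then h.1.eigenvectorUnitary.1 * diagonal (((↑) : ℝ → ℂ) ∘ (√·) ∘ h.1.eigenvalues) *
    (star h.1.eigenvectorUnitary : Matrix n n ℂ) else 0

open scoped MatrixOrder

lemma msqrt_eq {n : Type*} [Fintype n] [DecidableEq n] {A : Matrix n n ℂ} (hA : A.PosSemidef) :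
    msqrt A = CFC.sqrt A := by
  rw [msqrt, dif_pos hA, CFC.sqrt_eq_cfc, cfc_nnreal_eq_real _ A, hA.1.cfc_eq]
  simp only [IsHermitian.cfc, Unitary.conjStarAlgAut_apply]
  congr 3
  funext i
  simp [Real.coe_sqrt, hA.eigenvalues_nonneg i]

lemma traceNorm_eq {n : Type*} [Fintype n] [DecidableEq n] (A : Matrix n n ℂ) :
    traceNorm A = ((msqrt (Aᴴ * A)).trace).re := by
  unfold msqrt
  rw [traceNorm, dif_pos (Matrix.posSemidef_conjTranspose_mul_self A)]

lemma smul_posSemidef {n : Type*} [Fintype n] [DecidableEq n] {r : ℝ} (hr : 0 ≤ r)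
    {A : Matrix n n ℂ} (hA : A.PosSemidef) : ((r : ℂ) • A).PosSemidef := by
  constructor
  · have : ((r:ℂ) • A)ᴴ = star (r:ℂ) • Aᴴ := Matrix.conjTranspose_smul _ _
    rw [Matrix.IsHermitian, this, hA.1.eq]
    simp
  · intro x
    exact (hA.smul (show (0:ℂ) ≤ r by exact_mod_cast hr)).2 x

lemma msqrt_smul {n : Type*} [Fintype n] [DecidableEq n] {r : ℝ} (hr : 0 ≤ r)
    {A : Matrix n n ℂ} (hA : A.PosSemidef) :
    msqrt ((r : ℂ) • A) = ((Real.sqrt r : ℝ) : ℂ) • msqrt A := by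
  rw [msqrt_eq (smul_posSemidef hr hA), msqrt_eq hA]
  have hX : (((Real.sqrt r : ℝ) : ℂ) • CFC.sqrt A).PosSemidef :=
    smul_posSemidef (Real.sqrt_nonneg r) (Matrix.nonneg_iff_posSemidef.mp (CFC.sqrt_nonneg A))
  have hsq : (((Real.sqrt r : ℝ) : ℂ) • CFC.sqrt A) ^ 2 = (r : ℂ) • A := by
    rw [smul_pow, CFC.sq_sqrt A hA.nonneg]
    rw [← Complex.ofReal_pow, Real.sq_sqrt hr]
  exact CFC.sqrt_unique (by rw [← pow_two]; exact hsq) hX.nonneg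

/-- Fidelity `F(ρ,σ) = (Tr|ρ^{1/2}σ^{1/2}|)²`. -/
noncomputable def fidelity {n : Type*} [Fintype n] [DecidableEq n] (ρ σ : Matrix n n ℂ) : ℝ :=
  (traceNorm (msqrt ρ * msqrt σ))^2

/-- Purified distance `D_p(ρ,σ) = √(1 - F(ρ,σ))`. -/
noncomputable def purifiedDist {n : Type*} [Fintype n] [DecidableEq n] (ρ σ : Matrix n n ℂ) : ℝ :=
  Real.sqrt (1 - fidelity ρ σ)

/-- Gentle measurement lemma in purified-distance form. -/
theorem gentle_measurement {n : Type*} [Fintype n] [DecidableEq n]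
    (P ρ : Matrix n n ℂ) (ε : ℝ)
    (hPh : P.IsHermitian) (hP2 : P * P = P)
    (hρ : ρ.PosSemidef) (hρ1 : ρ.trace = 1)
    (hε0 : 0 ≤ ε) (hε1 : ε ≤ 1)
    (hpos : (P * ρ * P).trace ≠ 0)
    (htr : 1 - ε ≤ ((P * ρ).trace).re) :
    purifiedDist ρ (((P * ρ * P).trace)⁻¹ • (P * ρ * P)) ≤ Real.sqrt ε := by
  set M := P * ρ * P with hMdef
  have hM : M.PosSemidef := by
    have := hρ.conjTranspose_mul_mul_same P
    rwa [hPh.eq] at this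
  -- trace of M is a nonneg real
  have h0 : (0 : ℂ) ≤ M.trace := by
    rw [Matrix.trace]
    apply Finset.sum_nonneg
    intro i _
    have := hM.dotProduct_mulVec_nonneg (Pi.single i 1)
    simpa [Matrix.mulVec_single, dotProduct, Pi.single_apply, Matrix.diag] using this
  rw [Complex.le_def] at h0
  set c : ℝ := M.trace.re with hcdef
  have htC : M.trace = (c : ℂ) := by
    apply Complex.ext <;> simp [hcdef, ← h0.2]
  have hc0 : 0 ≤ c := by simpa using h0.1
  have hcne : c ≠ 0 := by
    intro h
    apply hpos
    rw [htC, h]; norm_num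
  have hcpos : 0 < c := lt_of_le_of_ne hc0 (Ne.symm hcne)
  -- S = sqrt M satisfies P * S = S = S * P
  set S := msqrt M with hSdef
  have hSpsd : S.PosSemidef := by rw [hSdef, msqrt_eq hM]; exact Matrix.nonneg_iff_posSemidef.mp (CFC.sqrt_nonneg M)
  have hS2 : S * S = M := by rw [hSdef, msqrt_eq hM]; exact CFC.sqrt_mul_sqrt_self M hM.nonneg
  have hPM : P * M = M := by rw [hMdef, ← Matrix.mul_assoc, ← Matrix.mul_assoc, hP2]
  have hMP : M * P = M := by rw [hMdef, Matrix.mul_assoc, Matrix.mul_assoc, hP2, ← Matrix.mul_assoc]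
  have hPS : P * S = S := by
    have hz : ((1 - P) * S) * ((1 - P) * S)ᴴ = 0 := by
      rw [Matrix.conjTranspose_mul, hSpsd.1.eq]
      have h1 : (1 - P)ᴴ = 1 - P := by
        rw [Matrix.conjTranspose_sub, Matrix.conjTranspose_one, hPh.eq]
      rw [h1]
      calc (1 - P) * S * (S * (1 - P)) = (1 - P) * (S * S) * (1 - P) := by
            noncomm_ring
        _ = (1 - P) * M * (1 - P) := by rw [hS2]
        _ = 0 := by
            rw [Matrix.sub_mul, Matrix.one_mul, hPM, sub_self, Matrix.zero_mul]
    have h1 := Matrix.self_mul_conjTranspose_eq_zero.mp hz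
    rw [Matrix.sub_mul, Matrix.one_mul, sub_eq_zero] at h1
    exact h1.symm
  have hSP : S * P = S := by
    have := congrArg Matrix.conjTranspose hPS
    rwa [Matrix.conjTranspose_mul, hSpsd.1.eq, hPh.eq] at this
  -- key computation: (√ρ * S)ᴴ * (√ρ * S) = M * M
  set R := msqrt ρ with hRdef
  have hRpsd : R.PosSemidef := by rw [hRdef, msqrt_eq hρ]; exact Matrix.nonneg_iff_posSemidef.mp (CFC.sqrt_nonneg ρ)
  have hR2 : R * R = ρ := by rw [hRdef, msqrt_eq hρ]; exact CFC.sqrt_mul_sqrt_self ρ hρ.nonneg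
  have hkey : (R * S)ᴴ * (R * S) = M * M := by
    rw [Matrix.conjTranspose_mul, hSpsd.1.eq, hRpsd.1.eq]
    calc S * R * (R * S) = S * (R * R) * S := by noncomm_ring
      _ = S * ρ * S := by rw [hR2]
      _ = (S * P) * ρ * (P * S) := by rw [hSP, hPS]
      _ = S * M * S := by rw [hMdef]; noncomm_ring
      _ = (S * S) * (S * S) := by rw [← hS2]; noncomm_ring
      _ = M * M := by rw [hS2]
  have hmsqMM : msqrt (M * M) = M := by
    rw [msqrt_eq (by rw [← pow_two]; exact hM.pow 2)]
    exact CFC.sqrt_unique rfl hM.nonneg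
  have hTN : traceNorm (R * S) = c := by
    rw [traceNorm_eq, hkey, hmsqMM, ← hcdef]
  -- the second state
  have hrho' : ((M.trace)⁻¹ • M) = ((c⁻¹ : ℝ) : ℂ) • M := by
    rw [htC]; norm_num
  have hmsq' : msqrt ((M.trace)⁻¹ • M) = ((Real.sqrt c⁻¹ : ℝ) : ℂ) • S := by
    rw [hrho', msqrt_smul (by positivity) hM, hSdef]
  -- fidelity computation
  have hfid : fidelity ρ ((M.trace)⁻¹ • M) = c := by
    rw [fidelity, hmsq', ← hRdef, Matrix.mul_smul, traceNorm_eq, Matrix.conjTranspose_smul,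
      Matrix.smul_mul, Matrix.mul_smul, smul_smul]
    have hst : star ((Real.sqrt c⁻¹ : ℝ) : ℂ) * ((Real.sqrt c⁻¹ : ℝ) : ℂ)
        = ((c⁻¹ : ℝ) : ℂ) := by
      rw [Complex.star_def, Complex.conj_ofReal, ← Complex.ofReal_mul,
        Real.mul_self_sqrt (by positivity)]
    rw [hst, msqrt_smul (by positivity) (Matrix.posSemidef_conjTranspose_mul_self _),
      hkey, hmsqMM, Matrix.trace_smul, htC, smul_eq_mul, ← Complex.ofReal_mul,
      Complex.ofReal_re, mul_pow, Real.sq_sqrt (by positivity)]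
    field_simp
  -- conclude
  rw [purifiedDist, hfid]
  apply Real.sqrt_le_sqrt
  have : c = ((P * ρ).trace).re := by
    rw [hcdef, hMdef, Matrix.trace_mul_cycle, hP2]
  linarith [htr, this ▸ htr]
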